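/- Let K ≥ 1, T ≥ 1, η > 0, and let x̂_t(i) ≥ 0 for t = 1,…,T and i = 1,…,K satisfy η·x̂_t(i) ≤ 1 for all t, i. Define weights w_1(i) = 1 and w_{t+1}(i) = w_t(i)·exp(η·x̂_t(i)), and probabilities p_t(i) = w_t(i) / ∑_{j=1}^K w_t(j). Then for every j ∈ {1,…,K}: ∑_{t=1}^T x̂_t(j) − ∑_{t=1}^T ∑_{i=1}^K p_t(i)·x̂_t(i) ≤ (e−2)·η·∑_{t=1}^T ∑_{i=1}^K p_t(i)·x̂_t(i)² + (ln K)/η. -/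

import Mathlib

/-- Exponential-weights weight sequence: `w 0 i = 1` and
`w (t+1) i = w t i · exp(η · x̂ t i)`. -/
noncomputable def ewWeight (K : ℕ) (η : ℝ) (xhat : ℕ → Fin K → ℝ) :
    ℕ → Fin K → ℝ
  | 0 => fun _ => 1
  | t + 1 => fun i => ewWeight K η xhat t i * Real.exp (η * xhat t i)

/-- Exponential-weights probabilities `p t i = w t i / ∑ j, w t j`. -/
noncomputable def ewProb (K : ℕ) (η : ℝ) (xhat : ℕ → Fin K → ℝ)
    (t : ℕ) (i : Fin K) : ℝ :=
  ewWeight K η xhat t i / ∑ j, ewWeight K η xhat t j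

open Finset in
/-- Quadratic bound on `exp` on `[0,1]`: `exp x ≤ 1 + x + (e-2)x²`. -/
lemma exp_le_quadratic {x : ℝ} (h0 : 0 ≤ x) (h1 : x ≤ 1) :
    Real.exp x ≤ 1 + x + (Real.exp 1 - 2) * x ^ 2 := by
  have hsum : ∀ y : ℝ, Summable (fun n : ℕ => y ^ n / n.factorial) :=
    Real.summable_pow_div_factorial
  have hshift : ∀ y : ℝ, Summable (fun n : ℕ => y ^ (n + 2) / (n + 2).factorial) :=
    fun y => (summable_nat_add_iff 2).2 (hsum y)
  have key : ∀ y : ℝ, Real.exp y = 1 + y + ∑' n : ℕ, y ^ (n + 2) / (n + 2).factorial := by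
    intro y
    have := Summable.sum_add_tsum_nat_add (f := fun n : ℕ => y ^ n / n.factorial) 2 (hsum y)
    have hy : Real.exp y = ∑' n : ℕ, y ^ n / n.factorial := by
      rw [Real.exp_eq_exp_ℝ, NormedSpace.exp_eq_tsum_div]
    rw [hy, ← this]
    simp [Finset.sum_range_succ]
  have he : Real.exp 1 - 2 = ∑' n : ℕ, (1 : ℝ) ^ (n + 2) / (n + 2).factorial := by
    rw [key 1]; ring
  have hle : ∑' n : ℕ, x ^ (n + 2) / (n + 2).factorial
      ≤ ∑' n : ℕ, x ^ 2 * ((1 : ℝ) ^ (n + 2) / (n + 2).factorial) := by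
    refine Summable.tsum_le_tsum (fun n => ?_) (hshift x) ((hshift 1).mul_left _)
    rw [one_pow, pow_add]
    rw [mul_div_assoc]
    have hxn : x ^ n ≤ 1 := pow_le_one₀ h0 h1
    have hfac : (0:ℝ) < (n + 2).factorial := by positivity
    have : x ^ n * (x ^ 2 / (n + 2).factorial) ≤ 1 * (x ^ 2 / (n + 2).factorial) := by
      apply mul_le_mul_of_nonneg_right hxn; positivity
    calc x ^ n * (x ^ 2 / (n + 2).factorial)
        ≤ 1 * (x ^ 2 / (n + 2).factorial) := this
      _ = x ^ 2 * (1 / (n + 2).factorial) := by ring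
  rw [key x, he]
  rw [tsum_mul_left] at hle
  nlinarith [hle]

open Finset in
lemma ewWeight_pos (K : ℕ) (η : ℝ) (xhat : ℕ → Fin K → ℝ) (t : ℕ) (i : Fin K) :
    0 < ewWeight K η xhat t i := by
  induction t with
  | zero => simp [ewWeight]
  | succ t ih => exact mul_pos ih (Real.exp_pos _)

open Finset in
lemma ewWeight_eq_exp (K : ℕ) (η : ℝ) (xhat : ℕ → Fin K → ℝ) (t : ℕ) (j : Fin K) :
    ewWeight K η xhat t j = Real.exp (η * ∑ s ∈ range t, xhat s j) := by
  induction t with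
  | zero => simp [ewWeight]
  | succ t ih =>
    rw [show ewWeight K η xhat (t+1) j = ewWeight K η xhat t j * Real.exp (η * xhat t j)
        from rfl, ih, ← Real.exp_add, Finset.sum_range_succ, mul_add]

/-- deterministic regret guarantee of the exponential-weights
update: for nonnegative estimated rewards `x̂ t i` with `η·x̂ t i ≤ 1`, and
for every `j`,
`∑_t x̂ t j − ∑_t ∑_i p t i·x̂ t i ≤ (e−2)·η·∑_t ∑_i p t i·(x̂ t i)² + (ln K)/η`.
(Rounds `t = 1,…,T` are indexed by `t ∈ range T`.) -/
theorem ew_regret (K T : ℕ) (hK : 1 ≤ K) (hT : 1 ≤ T)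
    (η : ℝ) (hη : 0 < η)
    (xhat : ℕ → Fin K → ℝ)
    (hx0 : ∀ t < T, ∀ i, 0 ≤ xhat t i)
    (hx1 : ∀ t < T, ∀ i, η * xhat t i ≤ 1)
    (j : Fin K) :
    ∑ t ∈ Finset.range T, xhat t j -
        ∑ t ∈ Finset.range T, ∑ i, ewProb K η xhat t i * xhat t i ≤
      (Real.exp 1 - 2) * η *
          ∑ t ∈ Finset.range T, ∑ i, ewProb K η xhat t i * xhat t i ^ 2 +
        Real.log K / η := by
  classical
  set e := Real.exp 1 with he
  set W : ℕ → ℝ := fun t => ∑ i, ewWeight K η xhat t i with hW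
  have hWpos : ∀ t, 0 < W t := fun t =>
    Finset.sum_pos (fun i _ => ewWeight_pos K η xhat t i)
      (Finset.univ_nonempty_iff.2 ⟨j⟩)
  set S1 : ℕ → ℝ := fun t => ∑ i, ewProb K η xhat t i * xhat t i with hS1
  set S2 : ℕ → ℝ := fun t => ∑ i, ewProb K η xhat t i * xhat t i ^ 2 with hS2
  set A : ℕ → ℝ := fun t => η * S1 t + (e - 2) * η ^ 2 * S2 t with hA
  -- per-step bound
  have step : ∀ t < T, W (t + 1) ≤ W t * Real.exp (A t) := by
    intro t ht
    have h1 : W (t + 1) = ∑ i, ewWeight K η xhat t i * Real.exp (η * xhat t i) := rfl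
    have h2 : W (t + 1) ≤ ∑ i, ewWeight K η xhat t i *
        (1 + η * xhat t i + (e - 2) * (η * xhat t i) ^ 2) := by
      rw [h1]
      refine Finset.sum_le_sum (fun i _ => ?_)
      refine mul_le_mul_of_nonneg_left ?_ (ewWeight_pos K η xhat t i).le
      exact exp_le_quadratic (mul_nonneg hη.le (hx0 t ht i)) (hx1 t ht i)
    have hw : ∀ i, ewWeight K η xhat t i = W t * ewProb K η xhat t i := by
      intro i
      rw [ewProb, mul_div_cancel₀ _ (hWpos t).ne']
    have h3 : ∑ i, ewWeight K η xhat t i *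
        (1 + η * xhat t i + (e - 2) * (η * xhat t i) ^ 2) = W t * (1 + A t) := by
      have : ∀ i : Fin K, ewWeight K η xhat t i *
          (1 + η * xhat t i + (e - 2) * (η * xhat t i) ^ 2)
          = ewWeight K η xhat t i
            + η * (W t * (ewProb K η xhat t i * xhat t i))
            + (e - 2) * η ^ 2 * (W t * (ewProb K η xhat t i * xhat t i ^ 2)) := by
        intro i
        rw [hw i]; ring
      rw [Finset.sum_congr rfl (fun i _ => this i)]
      rw [Finset.sum_add_distrib, Finset.sum_add_distrib, ← Finset.mul_sum,
        ← Finset.mul_sum, ← Finset.mul_sum, ← Finset.mul_sum]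
      simp only [hA, hS1, hS2]
      ring
    have h4 : W t * (1 + A t) ≤ W t * Real.exp (A t) :=
      mul_le_mul_of_nonneg_left (by linarith [Real.add_one_le_exp (A t)]) (hWpos t).le
    calc W (t + 1) ≤ ∑ i, ewWeight K η xhat t i *
          (1 + η * xhat t i + (e - 2) * (η * xhat t i) ^ 2) := h2
      _ = W t * (1 + A t) := h3
      _ ≤ W t * Real.exp (A t) := h4
  -- iterate
  have iter : ∀ n ≤ T, W n ≤ K * Real.exp (∑ t ∈ Finset.range n, A t) := by
    intro n
    induction n with
    | zero =>
      intro _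
      simp [hW, ewWeight]
    | succ n ih =>
      intro hn
      have hn' : n < T := hn
      calc W (n + 1) ≤ W n * Real.exp (A n) := step n hn'
        _ ≤ (K * Real.exp (∑ t ∈ Finset.range n, A t)) * Real.exp (A n) :=
            mul_le_mul_of_nonneg_right (ih hn'.le) (Real.exp_pos _).le
        _ = K * Real.exp (∑ t ∈ Finset.range (n + 1), A t) := by
            rw [Finset.sum_range_succ]
            conv_rhs => rw [Real.exp_add]
            rw [mul_assoc]
  -- lower bound
  have hlow : Real.exp (η * ∑ t ∈ Finset.range T, xhat t j) ≤ W T := by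
    rw [← ewWeight_eq_exp]
    exact Finset.single_le_sum (fun i _ => (ewWeight_pos K η xhat T i).le)
      (Finset.mem_univ j)
  have main : Real.exp (η * ∑ t ∈ Finset.range T, xhat t j)
      ≤ K * Real.exp (∑ t ∈ Finset.range T, A t) := le_trans hlow (iter T le_rfl)
  have hKpos : (0:ℝ) < K := by exact_mod_cast Nat.lt_of_lt_of_le Nat.zero_lt_one hK
  have hlog : η * ∑ t ∈ Finset.range T, xhat t j
      ≤ Real.log K + ∑ t ∈ Finset.range T, A t := by
    have := Real.log_le_log (Real.exp_pos _) main
    rwa [Real.log_exp, Real.log_mul hKpos.ne' (Real.exp_pos _).ne', Real.log_exp] at this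
  have hAsum : ∑ t ∈ Finset.range T, A t
      = η * ∑ t ∈ Finset.range T, S1 t + (e - 2) * η ^ 2 * ∑ t ∈ Finset.range T, S2 t := by
    simp only [hA, Finset.sum_add_distrib, Finset.mul_sum]
  rw [hAsum] at hlog
  have key : η * (∑ t ∈ Finset.range T, xhat t j - ∑ t ∈ Finset.range T, S1 t)
      ≤ η * ((e - 2) * η * ∑ t ∈ Finset.range T, S2 t + Real.log K / η) := by
    have hlogK : η * (Real.log ↑K / η) = Real.log ↑K := by field_simp
    nlinarith [hlog]
  have fin := (mul_le_mul_iff_right₀ hη).1 key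
  simp only [hS1, hS2] at fin
  linarith [fin]
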